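/- Let Y ∈ ℝ^{D×N} with 1 ≤ K ≤ D. There exists a single pair (X, Γ) ∈ ℝ^{K×N} × ℝ^{D×K} that simultaneously globally minimizes every b-truncation cost: for every b ∈ {1,…,K} and every (X', Γ') ∈ ℝ^{K×N} × ℝ^{D×K}, ‖Y − Γ^{(b)} X^{(b)}‖_F² ≤ ‖Y − Γ'^{(b)} X'^{(b)}‖_F². In particular, the minimum of the nested dropout cost equals the p-weighted sum of the minima of the individual b-truncation costs, for any probability mass function p on {1,…,K}. -/

import Mathlib

open Matrix BigOperators Finset
open scoped RealInnerProductSpace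

/-- The `b`-truncation cost `C⁽ᵇ⁾(X,Γ) = ‖Y − Γ⁽ᵇ⁾ X⁽ᵇ⁾‖_F²`, where `Γ⁽ᵇ⁾ X⁽ᵇ⁾`
uses only the first `b` columns of `Γ` and first `b` rows of `X`. -/
noncomputable def truncCost {D N K : ℕ} (Y : Matrix (Fin D) (Fin N) ℝ)
    (X : Matrix (Fin K) (Fin N) ℝ) (G : Matrix (Fin D) (Fin K) ℝ) (b : ℕ) : ℝ :=
  ∑ i, ∑ j, (Y i j - ∑ k : Fin K, if (k : ℕ) < b then G i k * X k j else 0) ^ 2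

/-- The nested dropout cost: mixture of the `b`-truncation costs, `b = 1, …, K`,
with mixing weights `p`. Here `b : Fin K` represents the truncation index `b+1`. -/
noncomputable def ndCost {D N K : ℕ} (Y : Matrix (Fin D) (Fin N) ℝ) (p : Fin K → ℝ)
    (X : Matrix (Fin K) (Fin N) ℝ) (G : Matrix (Fin D) (Fin K) ℝ) : ℝ :=
  ∑ b : Fin K, p b * truncCost Y X G ((b : ℕ) + 1)

/-! ### Auxiliary material -/

def toE {D : ℕ} (v : Fin D → ℝ) : EuclideanSpace ℝ (Fin D) := WithLp.toLp 2 v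

@[simp] lemma toE_apply {D : ℕ} (v : Fin D → ℝ) (i : Fin D) : toE v i = v i := rfl

/-- The columns of `Y` as vectors of Euclidean space. -/
def yc {D N : ℕ} (Y : Matrix (Fin D) (Fin N) ℝ) (j : Fin N) : EuclideanSpace ℝ (Fin D) :=
  toE (fun i => Y i j)

lemma sum_apply_euclid {D : ℕ} {ι : Type*} (s : Finset ι)
    (f : ι → EuclideanSpace ℝ (Fin D)) (i : Fin D) :
    (∑ k ∈ s, f k) i = ∑ k ∈ s, f k i :=
  map_sum (EuclideanSpace.proj i : EuclideanSpace ℝ (Fin D) →L[ℝ] ℝ) f s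

lemma norm_sq_euclid {D : ℕ} (v : EuclideanSpace ℝ (Fin D)) : ‖v‖^2 = ∑ i, (v i)^2 := by
  rw [EuclideanSpace.norm_eq, Real.sq_sqrt (by positivity)]
  simp [Real.norm_eq_abs, sq_abs]

lemma filter_lt_eq_map {D b : ℕ} (hb : b ≤ D) :
    Finset.univ.filter (fun i : Fin D => (i:ℕ) < b) = Finset.univ.map (Fin.castLEEmb hb) := by
  ext i
  simp only [Finset.mem_filter, Finset.mem_univ, true_and, Finset.mem_map, Fin.castLEEmb,
    Function.Embedding.coeFn_mk]
  constructor
  · intro h; exact ⟨⟨i, h⟩, rfl⟩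
  · rintro ⟨k, rfl⟩; exact k.2

lemma sum_lt_eq {D b : ℕ} (hb : b ≤ D) (h : Fin D → ℝ) :
    ∑ i ∈ Finset.univ.filter (fun i : Fin D => (i:ℕ) < b), h i
      = ∑ k : Fin b, h (Fin.castLE hb k) := by
  rw [filter_lt_eq_map hb, Finset.sum_map]; rfl

lemma kyfan_scalar {D b : ℕ} (hb : b ≤ D) (lam t : Fin D → ℝ)
    (hanti : Antitone lam) (h0 : ∀ i, 0 ≤ lam i)
    (ht0 : ∀ i, 0 ≤ t i) (ht1 : ∀ i, t i ≤ 1) (hts : ∑ i, t i ≤ (b:ℝ)) :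
    ∑ i, lam i * t i ≤ ∑ k : Fin b, lam (Fin.castLE hb k) := by
  classical
  set s := Finset.univ.filter (fun i : Fin D => (i:ℕ) < b) with hs
  have hcard : (s.card : ℝ) = b := by rw [hs, filter_lt_eq_map hb]; simp
  set μ : ℝ := if h : b < D then lam ⟨b, h⟩ else 0 with hμ
  have hμ0 : 0 ≤ μ := by rw [hμ]; split; exacts [h0 _, le_refl 0]
  have hlow : ∀ i ∈ s, μ ≤ lam i := by
    intro i hi
    rw [hs, Finset.mem_filter] at hi
    rw [hμ]; split
    · exact hanti (by exact Fin.le_def.mpr (le_of_lt hi.2))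
    · exact h0 i
  have hhigh : ∀ i ∈ sᶜ, lam i ≤ μ := by
    intro i hi
    rw [hs, Finset.mem_compl, Finset.mem_filter] at hi
    have hbi : b ≤ (i:ℕ) := le_of_not_gt (fun h => hi ⟨Finset.mem_univ _, h⟩)
    have hbD' : b < D := lt_of_le_of_lt hbi i.2
    rw [hμ, dif_pos hbD']
    exact hanti (Fin.le_def.mpr hbi)
  have split := (Finset.sum_add_sum_compl s (fun i => lam i * t i)).symm
  have h1 : ∑ i ∈ s, lam i * t i ≤ ∑ i ∈ s, (lam i + μ * (t i - 1)) := by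
    apply Finset.sum_le_sum
    intro i hi
    have := mul_le_mul_of_nonpos_right (hlow i hi) (by linarith [ht1 i] : t i - 1 ≤ 0)
    nlinarith [ht1 i, h0 i]
  have h2 : ∑ i ∈ sᶜ, lam i * t i ≤ ∑ i ∈ sᶜ, μ * t i :=
    Finset.sum_le_sum fun i hi => mul_le_mul_of_nonneg_right (hhigh i hi) (ht0 i)
  have h3 : ∑ i ∈ s, (lam i + μ * (t i - 1)) + ∑ i ∈ sᶜ, μ * t i
      = ∑ i ∈ s, lam i + μ * (∑ i, t i - b) := by
    rw [Finset.sum_add_distrib]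
    have : ∑ i ∈ s, μ * (t i - 1) + ∑ i ∈ sᶜ, μ * t i
        = μ * (∑ i, t i - b) := by
      rw [← Finset.mul_sum, ← Finset.mul_sum, ← mul_add]
      congr 1
      rw [Finset.sum_sub_distrib, Finset.sum_const, nsmul_eq_mul, mul_one]
      rw [add_comm, ← add_sub_assoc, ← Finset.sum_add_sum_compl s t]
      rw [hcard]; ring
    linarith
  have h4 : μ * (∑ i, t i - b) ≤ 0 :=
    mul_nonpos_of_nonneg_of_nonpos hμ0 (by linarith)
  calc ∑ i, lam i * t i = ∑ i ∈ s, lam i * t i + ∑ i ∈ sᶜ, lam i * t i := split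
    _ ≤ ∑ i ∈ s, lam i + μ * (∑ i, t i - b) := by linarith
    _ ≤ ∑ i ∈ s, lam i := by linarith
    _ = ∑ k : Fin b, lam (Fin.castLE hb k) := sum_lt_eq hb lam

lemma cost_eq {D N K : ℕ} (Y : Matrix (Fin D) (Fin N) ℝ)
    (X : Matrix (Fin K) (Fin N) ℝ) (G : Matrix (Fin D) (Fin K) ℝ) (b : ℕ)
    (w : Fin K → EuclideanSpace ℝ (Fin D)) (hG : ∀ i k, G i k = w k i) :
    truncCost Y X G b = ∑ j,
      ‖yc Y j - ∑ k ∈ Finset.univ.filter (fun k : Fin K => (k:ℕ) < b), X k j • w k‖^2 := by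
  rw [truncCost, Finset.sum_comm]
  refine Finset.sum_congr rfl fun j _ => ?_
  rw [norm_sq_euclid]
  refine Finset.sum_congr rfl fun i _ => ?_
  congr 1
  have happ : (yc Y j
        - ∑ k ∈ Finset.univ.filter (fun k : Fin K => (k:ℕ) < b), X k j • w k) i
      = Y i j - ∑ k ∈ Finset.univ.filter (fun k : Fin K => (k:ℕ) < b), X k j * w k i := by
    simp [sum_apply_euclid, yc]
  rw [happ]
  congr 1
  rw [Finset.sum_filter]
  refine Finset.sum_congr rfl fun k _ => ?_
  rw [hG i k]
  split <;> simp [mul_comm]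

lemma exists_spectral {D N : ℕ} (Y : Matrix (Fin D) (Fin N) ℝ) :
    ∃ (u : OrthonormalBasis (Fin D) ℝ (EuclideanSpace ℝ (Fin D))) (lam : Fin D → ℝ),
      Antitone lam ∧
      (∀ i, lam i = ∑ j, ⟪yc Y j, u i⟫ ^ 2) ∧
      (∀ v : EuclideanSpace ℝ (Fin D),
        ∑ j, ⟪yc Y j, v⟫ ^ 2 = ∑ i, lam i * ⟪u i, v⟫ ^ 2) := by
  classical
  set y : Fin N → EuclideanSpace ℝ (Fin D) := yc Y with hy
  set T : EuclideanSpace ℝ (Fin D) →ₗ[ℝ] EuclideanSpace ℝ (Fin D) :=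
    { toFun := fun v => ∑ j, ⟪y j, v⟫ • y j
      map_add' := by
        intro v w
        simp only [inner_add_right, add_smul]
        rw [Finset.sum_add_distrib]
      map_smul' := by
        intro c v
        simp only [inner_smul_right, RingHom.id_apply, smul_smul]
        rw [Finset.smul_sum]
        congr 1; ext j; rw [smul_smul] } with hTdef
  have hT : T.IsSymmetric := by
    intro v w
    simp only [hTdef, LinearMap.coe_mk, AddHom.coe_mk, sum_inner, inner_sum,
      real_inner_smul_left, real_inner_smul_right]
    refine Finset.sum_congr rfl fun j _ => ?_
    rw [real_inner_comm v (y j)]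
    ring
  have hTq : ∀ v : EuclideanSpace ℝ (Fin D), ⟪T v, v⟫ = ∑ j, ⟪y j, v⟫ ^ 2 := by
    intro v
    simp only [hTdef, LinearMap.coe_mk, AddHom.coe_mk, sum_inner, real_inner_smul_left, sq]
  have hrank : Module.finrank ℝ (EuclideanSpace ℝ (Fin D)) = D := by
    simp [finrank_euclideanSpace_fin]
  set u0 := hT.eigenvectorBasis hrank with hu0
  set mu := hT.eigenvalues hrank with hmu
  set σ : Equiv.Perm (Fin D) := Tuple.sort (fun i => -mu i) with hσ
  set u : OrthonormalBasis (Fin D) ℝ (EuclideanSpace ℝ (Fin D)) := u0.reindex σ.symm with hu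
  set lam : Fin D → ℝ := fun i => mu (σ i) with hlam
  have hui : ∀ i, u i = u0 (σ i) := by
    intro i; rw [hu, OrthonormalBasis.reindex_apply, Equiv.symm_symm]
  have hTu : ∀ i, T (u i) = lam i • u i := by
    intro i
    rw [hui i, hlam]
    exact hT.apply_eigenvectorBasis hrank (σ i)
  have hanti : Antitone lam := by
    have h := Tuple.monotone_sort (fun i => -mu i)
    intro i j hij
    have := h hij
    simp only [Function.comp_apply] at this
    rw [hlam]
    dsimp only at this ⊢
    linarith
  have hlameq : ∀ i, lam i = ∑ j, ⟪y j, u i⟫ ^ 2 := by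
    intro i
    rw [← hTq (u i), hTu i, real_inner_smul_left,
      real_inner_self_eq_norm_sq, u.orthonormal.1 i]
    ring
  have hexp : ∀ v : EuclideanSpace ℝ (Fin D),
      ∑ j, ⟪y j, v⟫ ^ 2 = ∑ i, lam i * ⟪u i, v⟫ ^ 2 := by
    intro v
    rw [← hTq v, ← u.sum_inner_mul_inner (T v) v]
    refine Finset.sum_congr rfl fun i _ => ?_
    have h1 : ⟪T v, u i⟫ = lam i * ⟪u i, v⟫ := by
      rw [hT v (u i), hTu i, real_inner_smul_right, real_inner_comm]
    rw [h1]; ring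
  exact ⟨u, lam, hanti, hlameq, hexp⟩

lemma proj_bound {D : ℕ} (W : Submodule ℝ (EuclideanSpace ℝ (Fin D)))
    (yv m : EuclideanSpace ℝ (Fin D)) (hm : m ∈ W) :
    ‖yv‖^2 - ∑ l, ⟪((stdOrthonormalBasis ℝ W) l : EuclideanSpace ℝ (Fin D)), yv⟫^2
      ≤ ‖yv - m‖^2 := by
  set f := stdOrthonormalBasis ℝ W with hf
  set P : W := W.orthogonalProjectionOnto yv with hP
  have hmin : ‖yv - P‖ ≤ ‖yv - m‖ := by
    show ‖yv - W.starProjection yv‖ ≤ _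
    rw [Submodule.starProjection_minimal]
    exact ciInf_le ⟨0, fun x ⟨w, hw⟩ => hw ▸ norm_nonneg _⟩ (⟨m, hm⟩ : W)
  have h2 : ‖yv - (P : EuclideanSpace ℝ (Fin D))‖^2 ≤ ‖yv - m‖^2 :=
    pow_le_pow_left₀ (norm_nonneg _) hmin 2
  have hsub : yv - (P : EuclideanSpace ℝ (Fin D)) + P = yv := sub_add_cancel yv P
  have hortho : ⟪yv - (P : EuclideanSpace ℝ (Fin D)), (P : EuclideanSpace ℝ (Fin D))⟫ = 0 :=
    Submodule.starProjection_inner_eq_zero (K := W) yv P P.2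
  have hpyth : ‖yv‖^2 = ‖yv - (P : EuclideanSpace ℝ (Fin D))‖^2
      + ‖(P : EuclideanSpace ℝ (Fin D))‖^2 := by
    have h3 := norm_add_sq_real (yv - (P : EuclideanSpace ℝ (Fin D)))
      (P : EuclideanSpace ℝ (Fin D))
    rw [hsub, hortho] at h3
    linarith
  have hflP : ∀ l, ⟪(f l : EuclideanSpace ℝ (Fin D)), (P : EuclideanSpace ℝ (Fin D))⟫
      = ⟪(f l : EuclideanSpace ℝ (Fin D)), yv⟫ := by
    intro l
    have h0 : ⟪yv - (P : EuclideanSpace ℝ (Fin D)), (f l : EuclideanSpace ℝ (Fin D))⟫ = 0 :=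
      Submodule.starProjection_inner_eq_zero (K := W) yv (f l) (f l).2
    rw [inner_sub_left] at h0
    rw [real_inner_comm, ← sub_eq_zero, real_inner_comm yv]
    linarith
  have hParseval : ‖(P : EuclideanSpace ℝ (Fin D))‖^2
      = ∑ l, ⟪(f l : EuclideanSpace ℝ (Fin D)), yv⟫^2 := by
    have h4 := f.sum_inner_mul_inner P P
    have h5 : ∀ l, ⟪P, f l⟫ * ⟪f l, P⟫
        = ⟪(f l : EuclideanSpace ℝ (Fin D)), yv⟫^2 := by
      intro l
      have h6 : ⟪f l, P⟫ = ⟪(f l : EuclideanSpace ℝ (Fin D)), yv⟫ := by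
        rw [Submodule.coe_inner]; exact hflP l
      have h7 : ⟪P, f l⟫ = ⟪(f l : EuclideanSpace ℝ (Fin D)), yv⟫ :=
        (real_inner_comm (f l) P) ▸ h6
      rw [h7, h6, sq]
    rw [Finset.sum_congr rfl (fun l _ => h5 l)] at h4
    calc ‖(P : EuclideanSpace ℝ (Fin D))‖^2 = ‖P‖^2 := by rw [Submodule.coe_norm]
      _ = ⟪P, P⟫ := (real_inner_self_eq_norm_sq P).symm
      _ = _ := h4.symm
  calc ‖yv‖^2 - ∑ l, ⟪((stdOrthonormalBasis ℝ W) l : EuclideanSpace ℝ (Fin D)), yv⟫^2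
      = ‖yv - (P : EuclideanSpace ℝ (Fin D))‖^2 := by rw [← hf, ← hParseval]; linarith
    _ ≤ ‖yv - m‖^2 := h2

lemma exists_min {D N K : ℕ} (hKD : K ≤ D) (Y : Matrix (Fin D) (Fin N) ℝ) :
    ∃ (X : Matrix (Fin K) (Fin N) ℝ) (G : Matrix (Fin D) (Fin K) ℝ),
      ∀ (b : Fin K) (X' : Matrix (Fin K) (Fin N) ℝ) (G' : Matrix (Fin D) (Fin K) ℝ),
        truncCost Y X G ((b:ℕ)+1) ≤ truncCost Y X' G' ((b:ℕ)+1) := by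
  classical
  obtain ⟨u, lam, hanti, hlameq, hexp⟩ := exists_spectral Y
  have hlam0 : ∀ i, 0 ≤ lam i := fun i => by
    rw [hlameq i]; exact Finset.sum_nonneg fun j _ => sq_nonneg _
  set e : Fin K → Fin D := Fin.castLE hKD with he
  refine ⟨fun k j => ⟪u (e k), yc Y j⟫, fun i k => u (e k) i, ?_⟩
  intro b X' G'
  set n := (b:ℕ)+1 with hn
  have hbK : n ≤ K := b.2
  have hbD : n ≤ D := le_trans hbK hKD
  set s : Finset (Fin K) := Finset.univ.filter (fun k : Fin K => (k:ℕ) < n) with hs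
  have hmem : ∀ k ∈ s, (k:ℕ) < n := fun k hk => (Finset.mem_filter.mp hk).2
  -- the common optimal value
  set V : ℝ := (∑ j, ‖yc Y j‖^2) - ∑ k : Fin n, lam (Fin.castLE hbD k) with hV
  have hcast : ∀ k : Fin n, e (Fin.castLE hbK k) = Fin.castLE hbD k := fun k => rfl
  -- achieved cost equals V
  have hach : truncCost Y (fun k j => ⟪u (e k), yc Y j⟫) (fun i k => u (e k) i) n = V := by
    refine (cost_eq Y _ _ n (fun k => u (e k)) (fun i k => rfl)).trans ?_
    have hw : Orthonormal ℝ (fun k => u (e k)) :=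
      u.orthonormal.comp e (Fin.castLE_injective hKD)
    have hjj : ∀ j, ‖yc Y j - ∑ k ∈ s, ⟪u (e k), yc Y j⟫ • u (e k)‖^2
        = ‖yc Y j‖^2 - ∑ k ∈ s, ⟪u (e k), yc Y j⟫^2 := by
      intro j
      rw [norm_sub_sq_real]
      have h1 : ⟪yc Y j, ∑ k ∈ s, ⟪u (e k), yc Y j⟫ • u (e k)⟫
          = ∑ k ∈ s, ⟪u (e k), yc Y j⟫^2 := by
        rw [inner_sum]
        refine Finset.sum_congr rfl fun k _ => ?_
        rw [real_inner_smul_right, sq, real_inner_comm (u (e k)) (yc Y j)]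
      have h2 : ‖∑ k ∈ s, ⟪u (e k), yc Y j⟫ • u (e k)‖^2
          = ∑ k ∈ s, ⟪u (e k), yc Y j⟫^2 := by
        rw [← real_inner_self_eq_norm_sq, hw.inner_sum]
        refine Finset.sum_congr rfl fun k _ => ?_
        simp [sq]
      rw [h1, h2]; ring
    rw [Finset.sum_congr rfl (fun j _ => hjj j), Finset.sum_sub_distrib, hV]
    congr 1
    rw [Finset.sum_comm]
    have hkk : ∀ k ∈ s, ∑ j, ⟪u (e k), yc Y j⟫^2 = lam (e k) := by
      intro k _
      rw [hlameq (e k)]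
      exact Finset.sum_congr rfl fun j _ => by rw [real_inner_comm]
    rw [Finset.sum_congr rfl hkk, hs, sum_lt_eq hbK (fun k => lam (e k))]
    exact Finset.sum_congr rfl fun k _ => congrArg lam (hcast k)
  rw [hach]
  -- lower bound for arbitrary X', G'
  set w' : Fin K → EuclideanSpace ℝ (Fin D) := fun k => toE (fun i => G' i k) with hw'
  rw [cost_eq Y X' G' n w' (fun i k => rfl)]
  set W : Submodule ℝ (EuclideanSpace ℝ (Fin D)) :=
    Submodule.span ℝ (Set.range (fun k : Fin n => w' (Fin.castLE hbK k))) with hW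
  have hmW : ∀ j, (∑ k ∈ s, X' k j • w' k) ∈ W := by
    intro j
    refine Submodule.sum_mem _ fun k hk => Submodule.smul_mem _ _ (Submodule.subset_span ?_)
    exact ⟨⟨(k:ℕ), hmem k hk⟩, by congr 1⟩
  have hrn : Module.finrank ℝ W ≤ n := by
    have := finrank_range_le_card (R := ℝ) (fun k : Fin n => w' (Fin.castLE hbK k))
    simpa [Set.finrank, ← hW] using this
  have horth : Orthonormal ℝ (fun l : Fin (Module.finrank ℝ W) => ((stdOrthonormalBasis ℝ W) l : EuclideanSpace ℝ (Fin D))) := by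
    have := (stdOrthonormalBasis ℝ W).orthonormal.comp_linearIsometry W.subtypeₗᵢ
    exact this
  set t : Fin D → ℝ := fun i => ∑ l : Fin (Module.finrank ℝ W), ⟪u i, ((stdOrthonormalBasis ℝ W) l : EuclideanSpace ℝ (Fin D))⟫^2 with ht
  have ht0 : ∀ i, 0 ≤ t i := fun i => Finset.sum_nonneg fun l _ => sq_nonneg _
  have ht1 : ∀ i, t i ≤ 1 := by
    intro i
    have hb := horth.sum_inner_products_le (u i) (s := Finset.univ)
    have hnorm : ‖u i‖^2 = 1 := by rw [u.orthonormal.1 i]; norm_num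
    calc t i = ∑ l : Fin (Module.finrank ℝ W), ‖⟪((stdOrthonormalBasis ℝ W) l : EuclideanSpace ℝ (Fin D)), u i⟫‖^2 := by
          refine Finset.sum_congr rfl fun l _ => ?_
          rw [Real.norm_eq_abs, sq_abs, real_inner_comm]
      _ ≤ ‖u i‖^2 := hb
      _ = 1 := hnorm
  have hts : ∑ i, t i ≤ (n:ℝ) := by
    have hcol : ∀ l : Fin (Module.finrank ℝ W), ∑ i, ⟪u i, ((stdOrthonormalBasis ℝ W) l : EuclideanSpace ℝ (Fin D))⟫^2 = 1 := by
      intro l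
      have h4 := u.sum_inner_mul_inner ((stdOrthonormalBasis ℝ W) l : EuclideanSpace ℝ (Fin D))
        ((stdOrthonormalBasis ℝ W) l : EuclideanSpace ℝ (Fin D))
      have h5 : ∀ i, ⟪((stdOrthonormalBasis ℝ W) l : EuclideanSpace ℝ (Fin D)), u i⟫
          * ⟪u i, ((stdOrthonormalBasis ℝ W) l : EuclideanSpace ℝ (Fin D))⟫
          = ⟪u i, ((stdOrthonormalBasis ℝ W) l : EuclideanSpace ℝ (Fin D))⟫^2 := by
        intro i; rw [real_inner_comm, sq]
      rw [Finset.sum_congr rfl (fun i _ => h5 i)] at h4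
      rw [h4, real_inner_self_eq_norm_sq, horth.1 l]
      norm_num
    calc ∑ i, t i = ∑ l : Fin (Module.finrank ℝ W), ∑ i, ⟪u i, ((stdOrthonormalBasis ℝ W) l : EuclideanSpace ℝ (Fin D))⟫^2 :=
          Finset.sum_comm
      _ = ∑ l : Fin (Module.finrank ℝ W), (1:ℝ) := Finset.sum_congr rfl fun l _ => hcol l
      _ = (Module.finrank ℝ W : ℝ) := by simp
      _ ≤ n := by exact_mod_cast hrn
  have hky : ∑ i, lam i * t i ≤ ∑ k : Fin n, lam (Fin.castLE hbD k) :=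
    kyfan_scalar hbD lam t hanti hlam0 ht0 ht1 hts
  have hlow : ∀ j, ‖yc Y j‖^2 - ∑ l : Fin (Module.finrank ℝ W), ⟪((stdOrthonormalBasis ℝ W) l : EuclideanSpace ℝ (Fin D)), yc Y j⟫^2
      ≤ ‖yc Y j - ∑ k ∈ s, X' k j • w' k‖^2 :=
    fun j => proj_bound W (yc Y j) _ (hmW j)
  have hsum : ∑ j, ∑ l : Fin (Module.finrank ℝ W), ⟪((stdOrthonormalBasis ℝ W) l : EuclideanSpace ℝ (Fin D)), yc Y j⟫^2
      = ∑ i, lam i * t i := by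
    rw [Finset.sum_comm]
    have hl : ∀ l : Fin (Module.finrank ℝ W), ∑ j, ⟪((stdOrthonormalBasis ℝ W) l : EuclideanSpace ℝ (Fin D)), yc Y j⟫^2
        = ∑ i, lam i * ⟪u i, ((stdOrthonormalBasis ℝ W) l : EuclideanSpace ℝ (Fin D))⟫^2 := by
      intro l
      rw [← hexp ((stdOrthonormalBasis ℝ W) l : EuclideanSpace ℝ (Fin D))]
      exact Finset.sum_congr rfl fun j _ => by rw [real_inner_comm]
    rw [Finset.sum_congr rfl (fun l _ => hl l), Finset.sum_comm]
    refine Finset.sum_congr rfl fun i _ => ?_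
    rw [ht, Finset.mul_sum]
  calc V ≤ (∑ j, ‖yc Y j‖^2) - ∑ i, lam i * t i := by rw [hV]; linarith
    _ = ∑ j, (‖yc Y j‖^2 - ∑ l : Fin (Module.finrank ℝ W), ⟪((stdOrthonormalBasis ℝ W) l : EuclideanSpace ℝ (Fin D)), yc Y j⟫^2) := by
        rw [Finset.sum_sub_distrib, hsum]
    _ ≤ ∑ j, ‖yc Y j - ∑ k ∈ s, X' k j • w' k‖^2 := Finset.sum_le_sum fun j _ => hlow j

/-- There exists a single pair `(X, Γ)` simultaneously globally minimizing every
`b`-truncation cost; consequently, for any probability mass function `p`, the minimum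
of the nested dropout cost equals the `p`-weighted sum of the minima of the
individual `b`-truncation costs. -/
theorem simultaneous_minimizer_exists
    {D N K : ℕ} (hK : 1 ≤ K) (hKD : K ≤ D)
    (Y : Matrix (Fin D) (Fin N) ℝ) :
    ∃ (X : Matrix (Fin K) (Fin N) ℝ) (G : Matrix (Fin D) (Fin K) ℝ),
      (∀ (b : Fin K) (X' : Matrix (Fin K) (Fin N) ℝ) (G' : Matrix (Fin D) (Fin K) ℝ),
        truncCost Y X G ((b : ℕ) + 1) ≤ truncCost Y X' G' ((b : ℕ) + 1)) ∧
      (∀ p : Fin K → ℝ, (∀ b, 0 ≤ p b) → (∑ b, p b = 1) →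
        ((∀ b : Fin K, IsLeast
            (Set.range fun q : Matrix (Fin K) (Fin N) ℝ × Matrix (Fin D) (Fin K) ℝ =>
              truncCost Y q.1 q.2 ((b : ℕ) + 1))
            (truncCost Y X G ((b : ℕ) + 1))) ∧
          IsLeast
            (Set.range fun q : Matrix (Fin K) (Fin N) ℝ × Matrix (Fin D) (Fin K) ℝ =>
              ndCost Y p q.1 q.2)
            (∑ b : Fin K, p b * truncCost Y X G ((b : ℕ) + 1)))) := by
  obtain ⟨X, G, hmin⟩ := exists_min hKD Y
  refine ⟨X, G, hmin, ?_⟩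
  intro p hp0 _
  constructor
  · intro b
    constructor
    · exact ⟨(X, G), rfl⟩
    · rintro c ⟨q, rfl⟩
      exact hmin b q.1 q.2
  · constructor
    · exact ⟨(X, G), rfl⟩
    · rintro c ⟨q, rfl⟩
      exact Finset.sum_le_sum fun b _ =>
        mul_le_mul_of_nonneg_left (hmin b q.1 q.2) (hp0 b)
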